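/- For every simple graph G on a finite vertex set, the determinant over GF(2) of the adjacency matrix of G equals the number of perfect matchings of G modulo 2, i.e. det G = pm(G). -/

import Mathlib

set_option linter.unusedSectionVars false

variable {V : Type*} [Fintype V] [DecidableEq V]

/-- Local complementation at a vertex `w`: complement the edges within `N_G(w)`. -/
def SimpleGraph.localComp (G : SimpleGraph V) (w : V) : SimpleGraph V where
  Adj x y := x ≠ y ∧ Xor' (G.Adj x y) (G.Adj x w ∧ G.Adj y w)
  symm := by
    constructor
    intro x y ⟨hne, hx⟩
    refine ⟨hne.symm, ?_⟩
    have h1 := G.adj_comm x y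
    unfold Xor' Xor at hx ⊢
    tauto
  loopless := by constructor; intro x ⟨h, _⟩; exact h rfl

/-- `x ∼_G y` : `x = y` or `{x,y}` is an edge of `G`. -/
def SimpleGraph.nbr (G : SimpleGraph V) (x y : V) : Prop := x = y ∨ G.Adj x y

theorem SimpleGraph.nbr_comm (G : SimpleGraph V) (x y : V) : G.nbr x y ↔ G.nbr y x :=
  or_congr eq_comm (G.adj_comm x y)

private theorem xor_swap_right (a b c : Prop) : Xor' (Xor' a b) c ↔ Xor' (Xor' a c) b := by
  unfold Xor' Xor; tauto

/-- The pivot `G[uv]` of `G` on an edge `{u,v}`, characterized by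
`x ∼_{G[uv]} y ⟺ (x ∼_G y) XOR ((x ∼_G u) ∧ (y ∼_G v)) XOR ((x ∼_G v) ∧ (y ∼_G u))`. -/
def SimpleGraph.pivot (G : SimpleGraph V) (u v : V) : SimpleGraph V where
  Adj x y := x ≠ y ∧
    Xor' (Xor' (G.nbr x y) (G.nbr x u ∧ G.nbr y v)) (G.nbr x v ∧ G.nbr y u)
  symm := by
    constructor
    intro x y ⟨hne, hx⟩
    refine ⟨hne.symm, ?_⟩
    show Xor' (Xor' (G.nbr y x) (G.nbr y u ∧ G.nbr x v)) (G.nbr y v ∧ G.nbr x u)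
    rw [G.nbr_comm y x, and_comm (a := G.nbr y u) (b := G.nbr x v),
      and_comm (a := G.nbr y v) (b := G.nbr x u)]
    exact (xor_swap_right _ _ _).mp hx
  loopless := by constructor; intro x ⟨h, _⟩; exact h rfl

/-- Determinant over GF(2) of the adjacency matrix of the subgraph of `G` induced by `S`. -/
noncomputable def gdet (G : SimpleGraph V) (S : Finset V) : ZMod 2 := by
  classical
  exact Matrix.det (Matrix.of fun i j : S => if G.Adj i j then (1 : ZMod 2) else 0)

/-- Apply a sequence of pivots (left to right). -/
def applyPivots (G : SimpleGraph V) : List (V × V) → SimpleGraph V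
  | [] => G
  | p :: φ => applyPivots (G.pivot p.1 p.2) φ

/-- A sequence of pivots is applicable when each pair is an edge of the graph
obtained by applying all preceding pivots. -/
def PivotsApplicable (G : SimpleGraph V) : List (V × V) → Prop
  | [] => True
  | p :: φ => G.Adj p.1 p.2 ∧ PivotsApplicable (G.pivot p.1 p.2) φ

/-- The support of a sequence of pivots: vertices occurring an odd number of times. -/
def pivotSupport (φ : List (V × V)) : Finset V :=
  Finset.univ.filter fun x => Odd ((φ.flatMap fun p => [p.1, p.2]).count x)

/-- A sequence of pivots is reduced if its pivot vertices are pairwise distinct. -/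
def ReducedSeq (φ : List (V × V)) : Prop := (φ.flatMap fun p => [p.1, p.2]).Nodup

/-- The number of perfect matchings of the subgraph of `G` induced by `S`:
sets of edges of `G` inside `S` such that every vertex of `S` lies in exactly one of them. -/
noncomputable def pmCount (G : SimpleGraph V) (S : Finset V) : ℕ := by
  classical
  exact (Finset.univ.filter fun P : Finset (Sym2 V) =>
    (∀ e ∈ P, e ∈ G.edgeSet ∧ ∀ v ∈ e, v ∈ S) ∧
    ∀ v ∈ S, ∃! e, e ∈ P ∧ v ∈ e).card

/-- the determinant over GF(2) of the adjacency matrix of `G` equals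
the number of perfect matchings of `G` modulo 2. -/
private lemma pm_card_eq (G : SimpleGraph V) :
    (@Finset.filter _ (fun σ : Equiv.Perm V => σ⁻¹ = σ ∧ ∀ i, G.Adj (σ i) i)
      (Classical.decPred _) Finset.univ).card
      = pmCount G Finset.univ := by
  classical
  unfold pmCount
  apply Finset.card_bij (fun σ _ => Finset.univ.image (fun v => s(v, σ v)))
  · -- maps into
    intro σ hσ
    simp only [Finset.mem_filter] at hσ
    obtain ⟨-, hinv, hadj⟩ := hσ
    have hfix : ∀ v, σ (σ v) = v := by
      intro v
      have h := (show ∀ (g : Equiv.Perm V) x, g⁻¹ (g x) = x from fun g x => Equiv.Perm.inv_eq_iff_eq.mpr rfl) σ v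
      rwa [hinv] at h
    simp only [Finset.mem_filter]
    refine ⟨Finset.mem_univ _, ?_, ?_⟩
    · intro e he
      rw [Finset.mem_image] at he
      obtain ⟨v, -, rfl⟩ := he
      exact ⟨(hadj v).symm, fun _ _ => Finset.mem_univ _⟩
    · intro v _
      refine ⟨s(v, σ v), ⟨Finset.mem_image_of_mem _ (Finset.mem_univ v), Sym2.mem_mk_left v _⟩, ?_⟩
      rintro e ⟨he, hv⟩
      rw [Finset.mem_image] at he
      obtain ⟨j, -, rfl⟩ := he
      rw [Sym2.mem_iff] at hv
      rcases hv with rfl | rfl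
      · rfl
      · rw [hfix j, Sym2.eq_swap]
  · -- injective
    intro σ hσ τ hτ h
    simp only [Finset.mem_filter] at hσ hτ
    have hfixτ : ∀ v, τ (τ v) = v := by
      intro v
      have hh := (show ∀ (g : Equiv.Perm V) x, g⁻¹ (g x) = x from fun g x => Equiv.Perm.inv_eq_iff_eq.mpr rfl) τ v
      rwa [hτ.2.1] at hh
    ext v
    have hmem : s(v, σ v) ∈ Finset.univ.image (fun w => s(w, τ w)) := by
      rw [← h]; exact Finset.mem_image_of_mem _ (Finset.mem_univ v)
    rw [Finset.mem_image] at hmem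
    obtain ⟨j, -, hj⟩ := hmem
    rw [Sym2.eq_iff] at hj
    rcases hj with ⟨rfl, h2⟩ | ⟨h1, h4⟩
    · exact h2.symm
    · have h5 : τ (σ v) = v := h1 ▸ h4
      calc σ v = τ (τ (σ v)) := (hfixτ _).symm
        _ = τ v := by rw [h5]
  · -- surjective
    intro P hP
    simp only [Finset.mem_filter] at hP
    obtain ⟨-, hPe, hPv⟩ := hP
    have hex : ∀ v : V, ∃ e, e ∈ P ∧ v ∈ e := fun v => (hPv v (Finset.mem_univ v)).exists
    set E : V → Sym2 V := fun v => Classical.choose (hex v) with hE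
    have hEmem : ∀ v, E v ∈ P ∧ v ∈ E v := fun v => Classical.choose_spec (hex v)
    have huniq : ∀ v e, e ∈ P → v ∈ e → e = E v := by
      intro v e he hv
      exact ExistsUnique.unique (hPv v (Finset.mem_univ v)) ⟨he, hv⟩ ⟨(hEmem v).1, (hEmem v).2⟩
    set f : V → V := fun v => Sym2.Mem.other' (hEmem v).2 with hf
    have hspec : ∀ v, s(v, f v) = E v := fun v => Sym2.other_spec' (hEmem v).2
    have hfmem : ∀ v, f v ∈ E v := fun v => Sym2.other_mem' (hEmem v).2
    have hadj : ∀ v, G.Adj v (f v) := by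
      intro v
      have hh : s(v, f v) ∈ G.edgeSet := by
        rw [hspec v]; exact (hPe (E v) (hEmem v).1).1
      exact hh
    have hEf : ∀ v, E (f v) = E v := fun v => (huniq (f v) (E v) (hEmem v).1 (hfmem v)).symm
    have hinvol : Function.Involutive f := by
      intro v
      have h1 : s(f v, f (f v)) = E v := by rw [hspec (f v), hEf]
      have h2 : s(f v, f (f v)) = s(v, f v) := by rw [h1, hspec]
      rw [Sym2.eq_iff] at h2
      rcases h2 with ⟨h3, h4⟩ | ⟨-, h4⟩
      · rw [h4, h3]
      · exact h4
    refine ⟨hinvol.toPerm f, ?_, ?_⟩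
    · simp only [Finset.mem_filter]
      refine ⟨Finset.mem_univ _, ?_, ?_⟩
      · ext v
        have hkey : (hinvol.toPerm f)⁻¹ v = f v := by
          apply (hinvol.toPerm f).injective
          rw [(show ∀ (g : Equiv.Perm V) x, g (g⁻¹ x) = x from fun g x => (Equiv.eq_symm_apply g).mp rfl)]
          exact (hinvol v).symm
        simpa [Function.Involutive.coe_toPerm] using hkey
      · intro i
        exact (hadj i).symm
    · ext e
      rw [Finset.mem_image]
      constructor
      · rintro ⟨v, -, rfl⟩
        have hh : s(v, f v) ∈ P := by rw [hspec]; exact (hEmem v).1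
        simpa [Function.Involutive.coe_toPerm] using hh
      · intro he
        obtain ⟨a, ha⟩ : ∃ a, a ∈ e := by
          induction e using Sym2.ind with
          | _ x y => exact ⟨x, Sym2.mem_mk_left x y⟩
        refine ⟨a, Finset.mem_univ a, ?_⟩
        have hh : e = E a := huniq a e he ha
        rw [show (hinvol.toPerm f) a = f a from rfl, hspec, ← hh]

theorem gdet_eq_pm (G : SimpleGraph V) :
    gdet G Finset.univ = (pmCount G Finset.univ : ZMod 2) := by
  classical
  set A : Matrix V V (ZMod 2) := Matrix.of fun i j => if G.Adj i j then 1 else 0 with hA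
  have h1 : gdet G Finset.univ = A.det := by
    rw [gdet]
    exact Matrix.det_submatrix_equiv_self
      (Equiv.subtypeUnivEquiv (p := fun x => x ∈ (Finset.univ : Finset V))
        (fun x => Finset.mem_univ x)) A
  have h2 : A.det = ∑ σ : Equiv.Perm V, ∏ i, A (σ i) i := by
    rw [Matrix.det_apply]
    refine Finset.sum_congr rfl fun σ _ => ?_
    rcases Int.units_eq_one_or (Equiv.Perm.sign σ) with h | h
    · simp [h]
    · rw [h, Units.smul_def, Units.val_neg, Units.val_one, neg_zsmul, one_zsmul,
        CharTwo.neg_eq]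
  have h3 : ∀ σ : Equiv.Perm V, (∏ i, A (σ i) i) = if (∀ i, G.Adj (σ i) i) then (1 : ZMod 2) else 0 := by
    intro σ
    by_cases h : ∀ i, G.Adj (σ i) i
    · rw [if_pos h]
      apply Finset.prod_eq_one
      intro i _
      simp [hA, h i]
    · rw [if_neg h]
      push_neg at h
      obtain ⟨i, hi⟩ := h
      apply Finset.prod_eq_zero (Finset.mem_univ i)
      simp [hA, hi]
  have hiff : ∀ σ : Equiv.Perm V, (∀ i, G.Adj (σ⁻¹ i) i) ↔ (∀ i, G.Adj (σ i) i) := by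
    intro σ
    constructor
    · intro hh i
      have := hh (σ i)
      rw [(show ∀ (g : Equiv.Perm V) x, g⁻¹ (g x) = x from fun g x => Equiv.Perm.inv_eq_iff_eq.mpr rfl)] at this
      exact this.symm
    · intro hh i
      have := hh (σ⁻¹ i)
      rw [(show ∀ (g : Equiv.Perm V) x, g (g⁻¹ x) = x from fun g x => (Equiv.eq_symm_apply g).mp rfl)] at this
      exact this.symm
  rw [h1, h2]
  calc (∑ σ : Equiv.Perm V, ∏ i, A (σ i) i)
      = ∑ σ : Equiv.Perm V, if (∀ i, G.Adj (σ i) i) then (1 : ZMod 2) else 0 :=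
        Finset.sum_congr rfl fun σ _ => h3 σ
    _ = ∑ σ ∈ Finset.univ.filter (fun σ : Equiv.Perm V => σ⁻¹ = σ),
          (if (∀ i, G.Adj (σ i) i) then (1 : ZMod 2) else 0) := by
        rw [← Finset.sum_filter_add_sum_filter_not Finset.univ
          (fun σ : Equiv.Perm V => σ⁻¹ = σ)]
        have hzero : ∑ σ ∈ Finset.univ.filter (fun σ : Equiv.Perm V => ¬ σ⁻¹ = σ),
            (if (∀ i, G.Adj (σ i) i) then (1 : ZMod 2) else 0) = 0 := by
          apply Finset.sum_involution (fun σ _ => σ⁻¹)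
          · intro σ _
            simp only [hiff σ]
            by_cases hc : ∀ i, G.Adj (σ i) i <;> simp [hc]
            decide
          · intro σ hσ _
            simp only [Finset.mem_filter] at hσ
            exact hσ.2
          · intro σ _
            exact inv_inv σ
          · intro σ hσ
            simp only [Finset.mem_filter] at hσ ⊢
            refine ⟨Finset.mem_univ _, ?_⟩
            rw [inv_inv]
            intro hc; exact hσ.2 hc.symm
        rw [hzero, add_zero]
    _ = (((Finset.univ.filter (fun σ : Equiv.Perm V => σ⁻¹ = σ)).filter
          (fun σ => ∀ i, G.Adj (σ i) i)).card : ZMod 2) := Finset.sum_boole _ _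
    _ = (pmCount G Finset.univ : ZMod 2) := by
        rw [Finset.filter_filter, ← pm_card_eq G]
        congr!
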